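/- Let β > 0 and set A = Γ(β)/Γ(β+1/4). The function y : [0,∞) → ℝ defined by y(x) = (e^{8x^{3/4}/(3A)} − 1)/(e^{8x^{3/4}/(3A)} + 1) satisfies y(0) = 0 and, for every x > 0, solves the Riccati fractional differential equation in the GFD sense of order α = 3/4: A·x^(1/4)·y′(x) + y(x)^2 = 1. -/

import Mathlib

open Real

/-- `y(x) = (e^{8x^{3/4}/(3A)} − 1)/(e^{8x^{3/4}/(3A)} + 1)`, with `A = Γ(β)/Γ(β+1/4)`,
satisfies `y 0 = 0` and solves the Riccati fractional differential equation in the GFD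
sense of order `3/4`: `A·x^(1/4)·y′(x) + y(x)² = 1` for all `x > 0`. -/
theorem gfd_riccati_three_quarters (β : ℝ) (hβ : 0 < β) (A : ℝ)
    (hA : A = Real.Gamma β / Real.Gamma (β + 1 / 4)) (y : ℝ → ℝ)
    (hy : ∀ x : ℝ, y x =
      (Real.exp (8 * x ^ ((3 : ℝ) / 4) / (3 * A)) - 1) /
      (Real.exp (8 * x ^ ((3 : ℝ) / 4) / (3 * A)) + 1)) :
    y 0 = 0 ∧
    ∀ x : ℝ, 0 < x → A * x ^ ((1 : ℝ) / 4) * deriv y x + (y x) ^ 2 = 1 := by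
  have hApos : 0 < A := by
    rw [hA]
    exact div_pos (Real.Gamma_pos_of_pos hβ) (Real.Gamma_pos_of_pos (by linarith))
  have hA0 : A ≠ 0 := ne_of_gt hApos
  have hyf : y = fun x : ℝ => (Real.exp (8 * x ^ ((3 : ℝ) / 4) / (3 * A)) - 1) /
      (Real.exp (8 * x ^ ((3 : ℝ) / 4) / (3 * A)) + 1) := funext hy
  clear hy
  subst hyf
  constructor
  · simp [Real.zero_rpow (by norm_num : (3:ℝ)/4 ≠ 0)]
  · intro x hx
    have h1 : HasDerivAt (fun x : ℝ => x ^ ((3:ℝ)/4))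
        ((3:ℝ)/4 * x ^ ((3:ℝ)/4 - 1)) x :=
      Real.hasDerivAt_rpow_const (Or.inl hx.ne')
    have h2 : HasDerivAt (fun x : ℝ => 8 * x ^ ((3:ℝ)/4) / (3 * A))
        (8 * ((3:ℝ)/4 * x ^ ((3:ℝ)/4 - 1)) / (3 * A)) x :=
      (h1.const_mul 8).div_const _
    have h3 : HasDerivAt (fun x : ℝ => Real.exp (8 * x ^ ((3:ℝ)/4) / (3 * A)))
        (Real.exp (8 * x ^ ((3:ℝ)/4) / (3 * A)) *
          (8 * ((3:ℝ)/4 * x ^ ((3:ℝ)/4 - 1)) / (3 * A))) x := h2.exp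
    set E := Real.exp (8 * x ^ ((3:ℝ)/4) / (3 * A)) with hE
    have hEpos : 0 < E := Real.exp_pos _
    have hden : E + 1 ≠ 0 := by positivity
    have h4 : HasDerivAt (fun x : ℝ =>
        (Real.exp (8 * x ^ ((3:ℝ)/4) / (3 * A)) - 1) /
        (Real.exp (8 * x ^ ((3:ℝ)/4) / (3 * A)) + 1))
        (((E * (8 * ((3:ℝ)/4 * x ^ ((3:ℝ)/4 - 1)) / (3 * A))) * (E + 1) -
          (E - 1) * (E * (8 * ((3:ℝ)/4 * x ^ ((3:ℝ)/4 - 1)) / (3 * A)))) / (E + 1) ^ 2) x :=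
      (h3.sub_const 1).div (h3.add_const 1) hden
    rw [h4.deriv]
    have ht : x ^ ((3:ℝ)/4 - 1) = (x ^ ((1:ℝ)/4))⁻¹ := by
      rw [show (3:ℝ)/4 - 1 = -(1/4) by norm_num, Real.rpow_neg hx.le]
    have hs0 : x ^ ((1:ℝ)/4) ≠ 0 := by positivity
    rw [ht]
    simp only [← hE]
    field_simp
    ring
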